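/- Let a ≥ b ≥ 2, n = a+b+1, and I = i_1⋯i_z ∈ W_≤ (all parts ≥ 2 and i_1 ≤ i_p − s). Then D_I = (s−1)(i_p − s − i_1) − 2 ≥ −2, and if D_I < 0 then s ∈ {1, 2, i_p − i_1}. -/

import Mathlib

open scoped Classical
open MvPolynomial Finset

noncomputable section

/-- `σ⁺_I(a)`: the minimal partial sum of `I` that is at least `a`. -/
def sigmaP (I : List ℕ) (a : ℝ) : ℝ :=
  sInf {x : ℝ | ∃ k ≤ I.length, x = ((I.take k).sum : ℝ) ∧ a ≤ x}

/-- `Θ⁺_I(a) = σ⁺_I(a) − a`. -/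
def thetaP (I : List ℕ) (a : ℝ) : ℝ := sigmaP I a - a

/-- `σ⁻_I(a)`: the maximal partial sum of `I` that is at most `a`. -/
def sigmaM (I : List ℕ) (a : ℝ) : ℝ :=
  sSup {x : ℝ | ∃ k ≤ I.length, x = ((I.take k).sum : ℝ) ∧ x ≤ a}

/-- `Θ⁻_I(a) = a − σ⁻_I(a)`. -/
def thetaM (I : List ℕ) (a : ℝ) : ℝ := a - sigmaM I a

/-- `w_I = i₁(i₂−1)⋯(i_z−1)`. -/
def wI : List ℕ → ℕ
  | [] => 1
  | i :: t => i * (t.map (· - 1)).prod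

/-- `e_I`: the product of elementary symmetric polynomials indexed by the parts of `I`,
in `N` variables. -/
def eComp (N : ℕ) (I : List ℕ) : MvPolynomial (Fin N) ℝ :=
  (I.map fun i => MvPolynomial.esymm (Fin N) ℝ i).prod

/-- The chromatic symmetric function of a graph, truncated to `N` variables. -/
def csf {V : Type} [Fintype V] (G : SimpleGraph V) (N : ℕ) : MvPolynomial (Fin N) ℝ :=
  ∑ κ : V → Fin N,
    if ∀ u v, G.Adj u v → κ u ≠ κ v then ∏ v, MvPolynomial.X (κ v) else 0

/-- Add a single edge `uv` to a graph. -/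
def addE {V : Type} (G : SimpleGraph V) (u v : V) : SimpleGraph V :=
  G ⊔ SimpleGraph.fromRel fun x y => x = u ∧ y = v

/-- The list of consecutive pairs of a list of vertices. -/
def chainE (l : List ℕ) : List (ℕ × ℕ) := l.zip l.tail

/-- The simple graph on `Fin n` with the given list of edges. -/
def graphOfEdges (n : ℕ) (E : List (ℕ × ℕ)) : SimpleGraph (Fin n) :=
  SimpleGraph.fromRel fun u v => ((u : ℕ), (v : ℕ)) ∈ E

/-- The path on `n` vertices. -/
def pathG (n : ℕ) : SimpleGraph (Fin n) := graphOfEdges n (chainE (List.range n))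

/-- The cycle on `n` vertices. -/
def cycleG (n : ℕ) : SimpleGraph (Fin n) :=
  graphOfEdges n (chainE (List.range n ++ [0]))

/-- The tadpole `C_a^l`: a cycle on `a` vertices with a path of `l` edges attached. -/
def tadpoleG (a l : ℕ) : SimpleGraph (Fin (a + l)) :=
  graphOfEdges (a + l)
    (chainE (List.range a ++ [0]) ++ chainE (0 :: (List.range l).map (· + a)))

/-- The theta graph `θ_{abc}`: two vertices (`0` and `a+b+c-2`) joined by three internally
disjoint paths of lengths `a`, `b`, `c`. -/
def thetaG (a b c : ℕ) : SimpleGraph (Fin (a + b + c - 1)) :=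
  graphOfEdges (a + b + c - 1)
    (chainE (0 :: ((List.range (a - 1)).map (· + 1) ++ [a + b + c - 2])) ++
     chainE (0 :: ((List.range (b - 1)).map (· + a) ++ [a + b + c - 2])) ++
     chainE (0 :: ((List.range (c - 1)).map (· + (a + b - 1)) ++ [a + b + c - 2])))

/-- The index `p` defined by `m = i₁ + ⋯ + i_{p-1} + s` with `1 ≤ s ≤ i_p`:
the least `k` with `i₁ + ⋯ + i_k ≥ m`. -/
def pIdx (I : List ℕ) (m : ℕ) : ℕ := sInf {k | m ≤ (I.take k).sum}

/-- The number `s` defined by `m = i₁ + ⋯ + i_{p-1} + s` with `1 ≤ s ≤ i_p`. -/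
def sVal (I : List ℕ) (m : ℕ) : ℕ := m - (I.take (pIdx I m - 1)).sum

/-- The index `q` defined by `m = i₂ + ⋯ + i_q + t` with `1 ≤ t ≤ i_{q+1}`
(convention `i_{z+1} = i₁`). -/
def qIdx (I : List ℕ) (m : ℕ) : ℕ := sInf {k | m ≤ ((I.tail ++ I.take 1).take k).sum}

/-- The number `t` defined by `m = i₂ + ⋯ + i_q + t` with `1 ≤ t ≤ i_{q+1}`. -/
def tVal (I : List ℕ) (m : ℕ) : ℕ := m - ((I.tail ++ I.take 1).take (qIdx I m - 1)).sum

/-- The part `i_p`. -/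
def ipPart (I : List ℕ) (m : ℕ) : ℕ := I.getD (pIdx I m - 1) 0

/-- The second elementary symmetric polynomial evaluated on a list. -/
def e2 : List ℕ → ℤ
  | [] => 0
  | x :: t => (x : ℤ) * t.sum + e2 t

/-- The cycle-chord coefficient `Δ_I(m)`. -/
def DeltaI (I : List ℕ) (m : ℕ) : ℤ :=
  if (I.headI : ℤ) ≤ (ipPart I m : ℤ) - sVal I m then
    (sVal I m : ℤ) * ((ipPart I m : ℤ) - sVal I m - I.headI)
  else
    e2 ((ipPart I m - sVal I m) ::
        ((I.drop (pIdx I m)).take (qIdx I m - pIdx I m) ++ [tVal I m]))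

/-- The length of the prefix `P` in the decomposition `I = PQ`, where `Q` is the shortest
suffix of `I` with `|Q| ≥ a`. -/
def kPhi (a : ℕ) (I : List ℕ) : ℕ := sSup {j | j ≤ I.length ∧ a ≤ (I.drop j).sum}

/-- The transformation `φ`: writing `I = PQ` with `Q` the shortest suffix of modulus `≥ a`,
`φ(I) = I` if `Q = I`, and otherwise `φ(I) = i₁ · reverse(P∖i₁) · Q`. -/
def phi (a : ℕ) (I : List ℕ) : List ℕ :=
  if kPhi a I = 0 then I
  else I.take 1 ++ ((I.drop 1).take (kPhi a I - 1)).reverse ++ I.drop (kPhi a I)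

/-- The starting position of the longest suffix `R_I` of `I` of modulus `≤ a`. -/
def rIdx (a : ℕ) (I : List ℕ) : ℕ := sInf {j | (I.drop j).sum ≤ a}

/-- The partial reversal `ψ(I) = reverse(L_I) R_I`, where `R_I` is the longest suffix of `I`
of modulus `≤ a` and `L_I` is the complementary prefix. -/
def psi (a : ℕ) (I : List ℕ) : List ℕ :=
  (I.take (rIdx a I)).reverse ++ I.drop (rIdx a I)

/-- The clock coefficient `D_I = Θ⁺_I(2) − Θ⁻_{reverse(φ(I))}(a) + Δ_I(b+1)`. -/
def DI (a b : ℕ) (I : List ℕ) : ℝ :=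
  thetaP I 2 - thetaM (phi a I).reverse a + (DeltaI I (b + 1) : ℝ)

end


section AuxStmt15

lemma myTakeSumMono (L : List ℕ) {k j : ℕ} (h : k ≤ j) :
    (L.take k).sum ≤ (L.take j).sum := by
  have h1 : L.take k = (L.take j).take k := by rw [List.take_take, min_eq_left h]
  rw [h1]
  exact (List.take_sublist _ _).sum_le_sum (fun a _ => Nat.zero_le a)

lemma myRevTake (L : List ℕ) (hne : L ≠ []) :
    L.reverse.take (L.length - 1) = L.tail.reverse := by
  obtain ⟨hd, tl, rfl⟩ := List.exists_cons_of_ne_nil hne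
  simp only [List.reverse_cons, List.length_cons, Nat.add_sub_cancel, List.tail_cons]
  rw [show tl.length = tl.reverse.length from (@List.length_reverse _ tl).symm, List.take_left]

lemma myDropTail (L : List ℕ) (n : ℕ) : (L.drop n).tail = L.drop (n + 1) := by
  rw [← List.drop_one, List.drop_drop]

lemma mySumTakeDrop (L : List ℕ) (n : ℕ) : (L.take n).sum + (L.drop n).sum = L.sum := by
  rw [← List.sum_append, List.take_append_drop]

lemma myHeadIMem (L : List ℕ) (hne : L ≠ []) : L.headI ∈ L := by
  obtain ⟨hd, tl, rfl⟩ := List.exists_cons_of_ne_nil hne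
  simp

lemma myTakeOne (L : List ℕ) (hne : L ≠ []) : (L.take 1).sum = L.headI := by
  obtain ⟨hd, tl, rfl⟩ := List.exists_cons_of_ne_nil hne
  simp

lemma mySumTakeSucc (L : List ℕ) (i : ℕ) (h : i < L.length) :
    (L.take (i + 1)).sum = (L.take i).sum + L.getD i 0 := by
  rw [List.sum_take_succ L i h, List.getD_eq_getElem L 0 h]

lemma mySigmaP (L : List ℕ) (hL : ∀ i ∈ L, 2 ≤ i) (hne : L ≠ []) :
    sigmaP L 2 = (L.headI : ℝ) := by
  have hlen : 1 ≤ L.length := List.length_pos_iff.mpr hne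
  have h2 : (2 : ℝ) ≤ (L.headI : ℝ) := by
    exact_mod_cast hL _ (myHeadIMem L hne)
  have hmem : (L.headI : ℝ) ∈
      {x : ℝ | ∃ k ≤ L.length, x = ((L.take k).sum : ℝ) ∧ 2 ≤ x} :=
    ⟨1, hlen, by exact_mod_cast congrArg (Nat.cast : ℕ → ℝ) (myTakeOne L hne).symm, h2⟩
  have hlb : ∀ x ∈ {x : ℝ | ∃ k ≤ L.length, x = ((L.take k).sum : ℝ) ∧ 2 ≤ x},
      (L.headI : ℝ) ≤ x := by
    rintro x ⟨k, hk, rfl, hx⟩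
    have hk1 : 1 ≤ k := by
      by_contra hc
      have : k = 0 := by omega
      rw [this] at hx; norm_num at hx
    have := myTakeSumMono L hk1
    rw [myTakeOne L hne] at this
    exact_mod_cast this
  exact le_antisymm (csInf_le ⟨_, hlb⟩ hmem) (le_csInf ⟨_, hmem⟩ hlb)

lemma mySigmaM (L : List ℕ) (a : ℝ) (k0 : ℕ) (hk0 : k0 ≤ L.length)
    (h1 : ((L.take k0).sum : ℝ) ≤ a)
    (h2 : ∀ k, k ≤ L.length → ((L.take k).sum : ℝ) ≤ a →
      (L.take k).sum ≤ (L.take k0).sum) :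
    sigmaM L a = ((L.take k0).sum : ℝ) := by
  have hmem : (((L.take k0).sum : ℕ) : ℝ) ∈
      {x : ℝ | ∃ k ≤ L.length, x = ((L.take k).sum : ℝ) ∧ x ≤ a} := ⟨k0, hk0, rfl, h1⟩
  have hub : ∀ x ∈ {x : ℝ | ∃ k ≤ L.length, x = ((L.take k).sum : ℝ) ∧ x ≤ a},
      x ≤ (((L.take k0).sum : ℕ) : ℝ) := by
    rintro x ⟨k, hk, rfl, hx⟩
    exact_mod_cast h2 k hk hx
  exact le_antisymm (csSup_le ⟨_, hmem⟩ hub) (le_csSup ⟨_, hub⟩ hmem)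

lemma keyStmt15 (a b n : ℕ) (h2 : 2 ≤ b) (hba : b ≤ a) (hn : n = a + b + 1)
    (B : List ℕ) (hsum : B.sum = n) (hW : ∀ i ∈ B, 2 ≤ i)
    (hle : (B.headI : ℤ) ≤ (ipPart B (b + 1) : ℤ) - sVal B (b + 1)) :
    DI a b B
        = ((sVal B (b + 1) : ℝ) - 1)
          * ((ipPart B (b + 1) : ℝ) - sVal B (b + 1) - B.headI) - 2 ∧
    -2 ≤ DI a b B ∧
    (DI a b B < 0 →
      sVal B (b + 1) = 1 ∨ sVal B (b + 1) = 2 ∨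
        sVal B (b + 1) = ipPart B (b + 1) - B.headI) := by
  set p := pIdx B (b + 1) with hp
  set s := sVal B (b + 1) with hs
  set ip := ipPart B (b + 1) with hip
  have hmn : b + 1 ≤ n := by omega
  have hzS : B.length ∈ {k | b + 1 ≤ (B.take k).sum} := by
    simp only [Set.mem_setOf_eq, List.take_length, hsum]; omega
  have hpS : b + 1 ≤ (B.take p).sum := Nat.sInf_mem (⟨_, hzS⟩ : Set.Nonempty _)
  have hpz : p ≤ B.length := Nat.sInf_le hzS
  have hppos : 0 < p := by
    rcases Nat.eq_zero_or_pos p with h0 | h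
    · rw [h0] at hpS; simp at hpS
    · exact h
  have hp' : p = sInf {k | b + 1 ≤ (B.take k).sum} := hp
  have hplt : (B.take (p - 1)).sum < b + 1 := by
    have := Nat.notMem_of_lt_sInf (show p - 1 < sInf {k | b + 1 ≤ (B.take k).sum} by
      rw [← hp']; omega)
    simp only [Set.mem_setOf_eq, not_le] at this
    exact this
  have hsdef : s = b + 1 - (B.take (p - 1)).sum := by rw [hs, sVal, ← hp]
  have hp1z : p - 1 < B.length := by omega
  have hipdef : ip = B.getD (p - 1) 0 := by rw [hip, ipPart, ← hp]
  have hstep : (B.take p).sum = (B.take (p - 1)).sum + ip := by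
    have h := mySumTakeSucc B (p - 1) hp1z
    rw [show p - 1 + 1 = p by omega] at h
    rw [h, hipdef]
  have hBne : B ≠ [] := List.length_pos_iff.mp (by omega)
  have hi1 : 2 ≤ B.headI := hW _ (myHeadIMem B hBne)
  have hips : B.headI + s ≤ ip := by
    have h : ((B.headI : ℤ) + s) ≤ (ip : ℤ) := by linarith
    exact_mod_cast h
  have hs1 : 1 ≤ s := by omega
  have hsip : s ≤ ip := by omega
  have hdropsum : ∀ j, (B.take j).sum + (B.drop j).sum = n := by
    intro j; rw [mySumTakeDrop, hsum]
  have hkPhi : kPhi a B = p - 1 := by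
    have hmem : p - 1 ∈ {j | j ≤ B.length ∧ a ≤ (B.drop j).sum} := by
      refine ⟨by omega, ?_⟩
      have := hdropsum (p - 1); omega
    have hub : ∀ j ∈ {j | j ≤ B.length ∧ a ≤ (B.drop j).sum}, j ≤ p - 1 := by
      rintro j ⟨hjz, hja⟩
      by_contra hcon
      push_neg at hcon
      have h1 : (B.take p).sum ≤ (B.take j).sum := myTakeSumMono B (by omega)
      have h2 := hdropsum j
      omega
    rw [kPhi]
    exact le_antisymm (csSup_le ⟨_, hmem⟩ hub)
      (le_csSup ⟨B.length, fun j hj => hj.1⟩ hmem)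
  -- the reversed φ(I)
  set L' := (phi a B).reverse with hL'
  have hfacts : L'.length = B.length ∧
      (L'.take (B.length - p)).sum = (B.drop p).sum ∧
      (L'.take (B.length - p + 1)).sum = (B.drop (p - 1)).sum := by
    by_cases hp1 : p = 1
    · have hphi : phi a B = B := by rw [phi, hkPhi, hp1]; simp
      rw [hL', hphi, hp1]
      refine ⟨@List.length_reverse _ B, ?_, ?_⟩
      · rw [myRevTake B hBne, List.sum_reverse, ← List.drop_one]
      · rw [show B.length - 1 + 1 = B.length by omega,
          List.take_of_length_le (le_of_eq (@List.length_reverse _ B)),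
          List.sum_reverse]
        simp
    · have hkne : ¬ (p - 1 = 0) := by omega
      have hphi : phi a B =
          B.take 1 ++ ((B.drop 1).take (p - 1 - 1)).reverse ++ B.drop (p - 1) := by
        rw [phi, hkPhi, if_neg hkne]
      have hL'eq : L' = (B.drop (p - 1)).reverse ++
          ((B.drop 1).take (p - 1 - 1) ++ (B.take 1).reverse) := by
        rw [hL', hphi]
        simp [List.reverse_append, List.reverse_reverse, List.append_assoc]
      have hlen1 : (B.drop (p - 1)).reverse.length = B.length - p + 1 := by
        rw [List.length_reverse, List.length_drop]; omega
      constructor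
      · rw [hL'eq]
        simp only [List.length_append, List.length_reverse, List.length_drop,
          List.length_take]
        omega
      constructor
      · rw [hL'eq, List.take_append_of_le_length (by omega)]
        have : B.length - p = (B.drop (p - 1)).length - 1 := by
          rw [List.length_drop]; omega
        rw [this, myRevTake _ (by
          intro hnil
          have := congrArg List.length hnil
          rw [List.length_drop] at this
          simp at this
          omega), myDropTail, List.sum_reverse,
          show p - 1 + 1 = p by omega]
      · rw [hL'eq, List.take_append_of_le_length (by omega),
          List.take_of_length_le (by omega), List.sum_reverse]
  obtain ⟨hL'len, hBfact, hCfact⟩ := hfacts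
  have hdp : (B.drop p).sum + ip = a + s := by
    have h1 := hdropsum p
    omega
  have hdp1 : (B.drop (p - 1)).sum = a + s := by
    have h1 := hdropsum (p - 1)
    omega
  have hsigM : sigmaM L' (a : ℝ) = (((B.drop p).sum : ℕ) : ℝ) := by
    rw [← hBfact]
    apply mySigmaM
    · omega
    · rw [hBfact]
      have h : (B.drop p).sum ≤ a := by omega
      exact_mod_cast h
    · intro k hk hka
      by_cases hksmall : k ≤ B.length - p
      · exact myTakeSumMono L' hksmall
      · exfalso
        have h1 : (L'.take (B.length - p + 1)).sum ≤ (L'.take k).sum :=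
          myTakeSumMono L' (by omega)
        rw [hCfact, hdp1] at h1
        have h3 : ((a : ℝ) + s) ≤ ((L'.take k).sum : ℝ) := by exact_mod_cast h1
        have h4 : (1 : ℝ) ≤ (s : ℝ) := by exact_mod_cast hs1
        linarith
  have hsigP : sigmaP B 2 = (B.headI : ℝ) := mySigmaP B hW hBne
  have hDelta : DeltaI B (b + 1) = (s : ℤ) * ((ip : ℤ) - s - B.headI) := by
    rw [DeltaI, ← hs, ← hip, if_pos hle]
  have hDI : DI a b B = ((s : ℝ) - 1) * ((ip : ℝ) - s - B.headI) - 2 := by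
    rw [DI, thetaP, thetaM, ← hL', hsigP, hsigM, hDelta]
    have hdpreal : (((B.drop p).sum : ℕ) : ℝ) + (ip : ℝ) = (a : ℝ) + s := by
      exact_mod_cast hdp
    have h1 : (((B.drop p).sum : ℕ) : ℝ) = (a : ℝ) + s - ip := by linarith
    rw [h1]
    push_cast
    ring
  have hX : (ip : ℝ) - s - B.headI = ((ip - s - B.headI : ℕ) : ℝ) := by
    have h' : ip - s - B.headI + (s + B.headI) = ip := by omega
    have h'' := congrArg (Nat.cast : ℕ → ℝ) h'
    push_cast at h''
    linarith
  refine ⟨hDI, ?_, ?_⟩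
  · rw [hDI]
    have h1 : (0 : ℝ) ≤ (s : ℝ) - 1 := by
      have : (1 : ℝ) ≤ (s : ℝ) := by exact_mod_cast hs1
      linarith
    have h2 : (0 : ℝ) ≤ (ip : ℝ) - s - B.headI := by
      have : ((B.headI + s : ℕ) : ℝ) ≤ (ip : ℝ) := by exact_mod_cast hips
      push_cast at this
      linarith
    nlinarith
  · intro hneg
    rw [hDI] at hneg
    have hprod : ((s - 1) * (ip - s - B.headI) : ℕ) < 2 := by
      have hcast : (((s - 1) * (ip - s - B.headI) : ℕ) : ℝ)
          = ((s : ℝ) - 1) * ((ip : ℝ) - s - B.headI) := by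
        rw [Nat.cast_mul, Nat.cast_sub hs1, Nat.cast_one, hX]
      have : (((s - 1) * (ip - s - B.headI) : ℕ) : ℝ) < 2 := by
        rw [hcast]; linarith
      exact_mod_cast this
    by_cases hX0 : ip - s - B.headI = 0
    · right; right; omega
    · have hX1 : 1 ≤ ip - s - B.headI := by omega
      have : s - 1 ≤ (s - 1) * (ip - s - B.headI) :=
        Nat.le_mul_of_pos_right _ (by omega)
      omega

end AuxStmt15

/-- For `I ∈ W_≤`: `D_I = (s − 1)(i_p − s − i₁) − 2 ≥ −2`, and if `D_I < 0` then
`s ∈ {1, 2, i_p − i₁}`. -/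
theorem stmt15 (a b n : ℕ) (h2 : 2 ≤ b) (hba : b ≤ a) (hn : n = a + b + 1)
    (I : Composition n) (hW : ∀ i ∈ I.blocks, 2 ≤ i)
    (hle : (I.blocks.headI : ℤ) ≤ (ipPart I.blocks (b + 1) : ℤ) - sVal I.blocks (b + 1)) :
    DI a b I.blocks
        = ((sVal I.blocks (b + 1) : ℝ) - 1)
          * ((ipPart I.blocks (b + 1) : ℝ) - sVal I.blocks (b + 1) - I.blocks.headI)
          - 2 ∧
    -2 ≤ DI a b I.blocks ∧
    (DI a b I.blocks < 0 →
      sVal I.blocks (b + 1) = 1 ∨ sVal I.blocks (b + 1) = 2 ∨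
        sVal I.blocks (b + 1) = ipPart I.blocks (b + 1) - I.blocks.headI) := by
  exact keyStmt15 a b n h2 hba hn I.blocks I.blocks_sum hW hle
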